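/- Let s, t be points with s ∈ C_t^0 to the right of the bisector B_t^0, ‖st‖_hex = 1, and let y₀ = ‖C_t^0 ∩ C_s^2‖ be the side length of the triangle T = C_t^0 ∩ C_s^2. Then 5·‖st‖_thex = 5 − 2.5·y₀. -/

import Mathlib

open Real

/-- Hexagonal norm: unit disk is the regular hexagon with east/west vertices (±1,0). -/
noncomputable def hexNorm (p : ℝ × ℝ) : ℝ :=
  max (2 * |p.2| / Real.sqrt 3) (max |p.1 + p.2 / Real.sqrt 3| |p.1 - p.2 / Real.sqrt 3|)

/-- Tipped hexagonal norm: unit disk is the regular hexagon with north/south vertices (0, ±2/√3). -/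
noncomputable def thexNorm (p : ℝ × ℝ) : ℝ :=
  max |p.1| (max (|p.1 + Real.sqrt 3 * p.2| / 2) (|p.1 - Real.sqrt 3 * p.2| / 2))

/-- Euclidean norm of a planar vector. -/
noncomputable def eucNorm (p : ℝ × ℝ) : ℝ := Real.sqrt (p.1 ^ 2 + p.2 ^ 2)

/-- Rotation of a planar vector by angle θ (counterclockwise). -/
noncomputable def rot (θ : ℝ) (p : ℝ × ℝ) : ℝ × ℝ :=
  (Real.cos θ * p.1 - Real.sin θ * p.2, Real.sin θ * p.1 + Real.cos θ * p.2)

/-- The cone of directions pointing straight down (spanning 60°), bounded by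
lines of slopes √3 and -√3 through the origin. -/
def cone0 : Set (ℝ × ℝ) := {v | v.2 ≤ 0 ∧ Real.sqrt 3 * |v.1| ≤ -v.2}

/-- Coordinates of q in the frame of the i-th cone of p (cone rotated back to cone0). -/
noncomputable def localCoord (p : ℝ × ℝ) (i : ZMod 6) (q : ℝ × ℝ) : ℝ × ℝ :=
  rot (-((i.val : ℝ) * (Real.pi / 3))) (q - p)

/-- The closed cone `C_p^i`: the six cones about p determined by the lines of
slopes -√3, 0, √3 through p, labeled counterclockwise with `C_p^0` directly below p. -/
def cone (p : ℝ × ℝ) (i : ZMod 6) : Set (ℝ × ℝ) :=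
  {q | localCoord p i q ∈ cone0}

/-- The triangle `∇_u^v`: points of the cone of u containing v whose hex-distance
to u is at most that of v. -/
def nabla (u v : ℝ × ℝ) : Set (ℝ × ℝ) :=
  {r | hexNorm (r - u) ≤ hexNorm (v - u) ∧ ∀ i : ZMod 6, v ∈ cone u i → r ∈ cone u i}

/-- Side length of an equilateral triangle with sides of slopes -√3, 0, √3,
realized as its diameter in the hexagonal norm. -/
noncomputable def sideLen (T : Set (ℝ × ℝ)) : ℝ :=
  sSup ((fun pq : (ℝ × ℝ) × (ℝ × ℝ) => hexNorm (pq.1 - pq.2)) '' (T ×ˢ T))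

/-- General position: no two points lie on a common line of slope -√3, 0 or √3. -/
def genPos (P : Finset (ℝ × ℝ)) : Prop :=
  ∀ p ∈ P, ∀ q ∈ P, p ≠ q →
    p.2 ≠ q.2 ∧ p.2 - q.2 ≠ Real.sqrt 3 * (p.1 - q.1) ∧
      p.2 - q.2 ≠ -(Real.sqrt 3) * (p.1 - q.1)

/-- Edge of the directed Theta-6 graph of P: from u to v exactly when the interior
of `∇_u^v` contains no point of P. -/
def isEdge (P : Finset (ℝ × ℝ)) (u v : ℝ × ℝ) : Prop :=
  u ∈ P ∧ v ∈ P ∧ u ≠ v ∧ ∀ p ∈ P, p ∉ interior (nabla u v)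

/-- A directed path in the Theta-6 graph of P from s to t, given as its list of vertices. -/
def isPath (P : Finset (ℝ × ℝ)) (ℓ : List (ℝ × ℝ)) (s t : ℝ × ℝ) : Prop :=
  ℓ ≠ [] ∧ ℓ.head? = some s ∧ ℓ.getLast? = some t ∧ ℓ.Chain' (isEdge P)

/-- Euclidean length of a path. -/
noncomputable def pathLen (ℓ : List (ℝ × ℝ)) : ℝ :=
  ((ℓ.zip ℓ.tail).map (fun pq => eucNorm (pq.2 - pq.1))).sum

set_option maxHeartbeats 1000000

lemma sqrt3_pos : (0:ℝ) < Real.sqrt 3 := Real.sqrt_pos.2 (by norm_num)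
lemma sqrt3_sq : Real.sqrt 3 * Real.sqrt 3 = 3 := Real.mul_self_sqrt (by norm_num)

lemma hexNorm_eq (w : ℝ × ℝ) : hexNorm w =
    max (2*|w.2|) (max |Real.sqrt 3*w.1+w.2| |Real.sqrt 3*w.1-w.2|) / Real.sqrt 3 := by
  have hp := sqrt3_pos
  have e1 : |w.1 + w.2/Real.sqrt 3| = |Real.sqrt 3*w.1+w.2|/Real.sqrt 3 := by
    rw [show w.1 + w.2/Real.sqrt 3 = (Real.sqrt 3*w.1+w.2)/Real.sqrt 3 by field_simp,
      abs_div, abs_of_pos hp]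
  have e2 : |w.1 - w.2/Real.sqrt 3| = |Real.sqrt 3*w.1-w.2|/Real.sqrt 3 := by
    rw [show w.1 - w.2/Real.sqrt 3 = (Real.sqrt 3*w.1-w.2)/Real.sqrt 3 by field_simp,
      abs_div, abs_of_pos hp]
  rw [hexNorm, e1, e2, max_div_div_right hp.le, max_div_div_right hp.le]

lemma mem_cone_zero (t q : ℝ × ℝ) :
    q ∈ cone t 0 ↔ q.2 - t.2 ≤ 0 ∧ Real.sqrt 3 * |q.1 - t.1| ≤ -(q.2 - t.2) := by
  simp [cone, localCoord, rot, cone0]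

lemma mem_cone_two (s q : ℝ × ℝ) :
    q ∈ cone s 2 ↔ 0 ≤ q.2 - s.2 ∧ q.2 - s.2 ≤ Real.sqrt 3 * (q.1 - s.1) := by
  have h2 : ((2 : ZMod 6).val : ℝ) = 2 := by
    have : (2 : ZMod 6).val = 2 := rfl
    rw [this]; norm_num
  have hang : -(((2 : ZMod 6).val : ℝ) * (Real.pi / 3)) = -(Real.pi - Real.pi/3) := by
    rw [h2]; ring
  have hc : Real.cos (-(((2 : ZMod 6).val : ℝ) * (Real.pi / 3))) = -(1/2) := by
    rw [hang, Real.cos_neg, Real.cos_pi_sub, Real.cos_pi_div_three]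
  have hsn : Real.sin (-(((2 : ZMod 6).val : ℝ) * (Real.pi / 3))) = -(Real.sqrt 3/2) := by
    rw [hang, Real.sin_neg, Real.sin_pi_sub, Real.sin_pi_div_three]
  simp only [cone, localCoord, rot, cone0, Set.mem_setOf_eq, hc, hsn, Prod.fst_sub, Prod.snd_sub]
  set u := q.1 - s.1 with hu
  set v := q.2 - s.2 with hv
  clear_value u v
  have h3 := sqrt3_sq
  have hp := sqrt3_pos
  have hX : Real.sqrt 3 * (-(1/2) * u - -(Real.sqrt 3/2) * v)
      = -(Real.sqrt 3 * u)/2 + 3 * v / 2 := by linear_combination (v/2) * h3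
  constructor
  · rintro ⟨h1, habs⟩
    have habs' : |Real.sqrt 3 * (-(1/2) * u - -(Real.sqrt 3/2) * v)| ≤
        -(-(Real.sqrt 3/2) * u + -(1/2) * v) := by
      rwa [abs_mul, abs_of_pos hp]
    rw [abs_le] at habs'
    obtain ⟨hl, hr⟩ := habs'
    rw [hX] at hl hr
    exact ⟨by linarith, by linarith⟩
  · rintro ⟨h1, h2'⟩
    refine ⟨by linarith, ?_⟩
    have habs' : |Real.sqrt 3 * (-(1/2) * u - -(Real.sqrt 3/2) * v)| ≤
        -(-(Real.sqrt 3/2) * u + -(1/2) * v) := by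
      rw [abs_le, hX]
      exact ⟨by linarith, by linarith⟩
    rwa [abs_mul, abs_of_pos hp] at habs'

theorem stmt19 (s t : ℝ × ℝ) (hs : s ∈ cone t 0) (hRight : t.1 ≤ s.1)
    (hunit : hexNorm (s - t) = 1) :
    5 * thexNorm (s - t) = 5 - 2.5 * sideLen (cone t 0 ∩ cone s 2) := by
  have hp := sqrt3_pos
  have h3 := sqrt3_sq
  have hpne : Real.sqrt 3 ≠ 0 := ne_of_gt hp
  obtain ⟨hy, habs⟩ := (mem_cone_zero t s).1 hs
  have hx0 : (0:ℝ) ≤ s.1 - t.1 := by linarith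
  rw [abs_of_nonneg hx0] at habs
  have hfst : (s - t).1 = s.1 - t.1 := rfl
  have hsnd : (s - t).2 = s.2 - t.2 := rfl
  have hsx0 : 0 ≤ Real.sqrt 3 * (s.1 - t.1) := mul_nonneg hp.le hx0
  -- step 1: the second coordinate
  have hy2 : s.2 - t.2 = -(Real.sqrt 3/2) := by
    have hM : max (2*|(s-t).2|) (max |Real.sqrt 3*(s-t).1+(s-t).2| |Real.sqrt 3*(s-t).1-(s-t).2|)
        = -2*(s.2 - t.2) := by
      rw [hfst, hsnd]
      have a1 : |s.2 - t.2| = -(s.2 - t.2) := abs_of_nonpos hy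
      have a2 : |Real.sqrt 3*(s.1-t.1) - (s.2-t.2)| = Real.sqrt 3*(s.1-t.1) - (s.2-t.2) :=
        abs_of_nonneg (by linarith)
      have a3 : |Real.sqrt 3*(s.1-t.1) + (s.2-t.2)| ≤ -2*(s.2-t.2) :=
        abs_le.2 ⟨by linarith, by linarith⟩
      rw [a1, a2]
      apply le_antisymm
      · exact max_le (by linarith) (max_le a3 (by linarith))
      · exact le_max_iff.2 (Or.inl (by linarith))
    rw [hexNorm_eq, hM] at hunit
    rw [div_eq_one_iff_eq hpne] at hunit
    linarith
  have hxhalf : s.1 - t.1 ≤ 1/2 := by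
    have h : Real.sqrt 3 * (s.1 - t.1) ≤ Real.sqrt 3 * (1/2) := by linarith
    exact le_of_mul_le_mul_left h hp
  -- step 2: thexNorm value
  have hsy : Real.sqrt 3 * (s.2 - t.2) = -(3/2) := by
    rw [hy2]; linear_combination (-(1/2)) * h3
  have hthex : thexNorm (s - t) = ((s.1 - t.1) + 3/2)/2 := by
    simp only [thexNorm, hfst, hsnd, hsy]
    rw [abs_of_nonneg hx0,
      show s.1 - t.1 + -(3/2) = -(3/2 - (s.1 - t.1)) by ring, abs_neg,
      abs_of_nonneg (by linarith : (0:ℝ) ≤ 3/2 - (s.1 - t.1)),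
      show s.1 - t.1 - -(3/2) = (s.1 - t.1) + 3/2 by ring,
      abs_of_nonneg (by linarith : (0:ℝ) ≤ (s.1 - t.1) + 3/2),
      max_eq_right (by linarith : (3/2 - (s.1-t.1))/2 ≤ ((s.1-t.1) + 3/2)/2),
      max_eq_right (by linarith : s.1 - t.1 ≤ ((s.1-t.1) + 3/2)/2)]
  -- step 3: the key bounds on points of the triangle
  have key : ∀ q ∈ cone t 0 ∩ cone s 2,
      (t.2 - Real.sqrt 3/2 ≤ q.2 ∧
        q.2 ≤ t.2 - Real.sqrt 3/2 + Real.sqrt 3*(1/2 - (s.1-t.1))/2) ∧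
      (Real.sqrt 3*(s.1-t.1) + Real.sqrt 3/2 ≤ Real.sqrt 3*q.1 - Real.sqrt 3*t.1 - (q.2 - t.2) ∧
        Real.sqrt 3*q.1 - Real.sqrt 3*t.1 - (q.2 - t.2) ≤ Real.sqrt 3) ∧
      (Real.sqrt 3*(s.1-t.1) - Real.sqrt 3/2 ≤ Real.sqrt 3*q.1 - Real.sqrt 3*t.1 + (q.2 - t.2) ∧
        Real.sqrt 3*q.1 - Real.sqrt 3*t.1 + (q.2 - t.2) ≤ 0) := by
    rintro q ⟨hq0, hq2⟩
    rw [mem_cone_zero] at hq0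
    rw [mem_cone_two] at hq2
    obtain ⟨hb0, hbabs⟩ := hq0
    obtain ⟨hv0, hvu⟩ := hq2
    have hA1 : Real.sqrt 3*(q.1 - t.1) ≤ -(q.2 - t.2) :=
      le_trans (mul_le_mul_of_nonneg_left (le_abs_self _) hp.le) hbabs
    have hA2 : Real.sqrt 3*(-(q.1 - t.1)) ≤ -(q.2 - t.2) :=
      le_trans (mul_le_mul_of_nonneg_left (neg_le_abs _) hp.le) hbabs
    refine ⟨⟨by linarith, by linarith⟩, ⟨by linarith, by linarith⟩, by linarith, by linarith⟩
  -- step 4: the upper bound for the sup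
  have upper : ∀ z ∈ ((fun pq : (ℝ × ℝ) × (ℝ × ℝ) => hexNorm (pq.1 - pq.2)) ''
      ((cone t 0 ∩ cone s 2) ×ˢ (cone t 0 ∩ cone s 2))), z ≤ 1/2 - (s.1 - t.1) := by
    rintro z ⟨⟨p, q⟩, hpq, rfl⟩
    rw [Set.mem_prod] at hpq
    dsimp only
    obtain ⟨K1p, K2p, K3p⟩ := key p hpq.1
    obtain ⟨K1q, K2q, K3q⟩ := key q hpq.2
    have hfst' : (p - q).1 = p.1 - q.1 := rfl
    have hsnd' : (p - q).2 = p.2 - q.2 := rfl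
    rw [hexNorm_eq, hfst', hsnd', div_le_iff₀ hp]
    have b1 : |p.2 - q.2| ≤ Real.sqrt 3*(1/2 - (s.1-t.1))/2 :=
      abs_le.2 ⟨by linarith [K1p.1, K1q.2], by linarith [K1p.2, K1q.1]⟩
    have b2 : |Real.sqrt 3*(p.1 - q.1) + (p.2 - q.2)| ≤ Real.sqrt 3*(1/2 - (s.1-t.1)) := by
      refine abs_le.2 ⟨?_, ?_⟩ <;> [linarith [K3p.1, K3p.2, K3q.1, K3q.2];
        linarith [K3p.1, K3p.2, K3q.1, K3q.2]]
    have b3 : |Real.sqrt 3*(p.1 - q.1) - (p.2 - q.2)| ≤ Real.sqrt 3*(1/2 - (s.1-t.1)) := by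
      refine abs_le.2 ⟨?_, ?_⟩ <;> [linarith [K2p.1, K2p.2, K2q.1, K2q.2];
        linarith [K2p.1, K2p.2, K2q.1, K2q.2]]
    refine max_le (by linarith) (max_le ?_ ?_)
    · calc |Real.sqrt 3*(p.1-q.1)+(p.2-q.2)| ≤ Real.sqrt 3*(1/2 - (s.1-t.1)) := b2
        _ = (1/2 - (s.1-t.1)) * Real.sqrt 3 := by ring
    · calc |Real.sqrt 3*(p.1-q.1)-(p.2-q.2)| ≤ Real.sqrt 3*(1/2 - (s.1-t.1)) := b3
        _ = (1/2 - (s.1-t.1)) * Real.sqrt 3 := by ring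
  -- step 5: the sup is attained
  have hside : sideLen (cone t 0 ∩ cone s 2) = 1/2 - (s.1 - t.1) := by
    apply le_antisymm
    · exact Real.sSup_le upper (by linarith)
    · have hAT : (t.1 + 1/2, t.2 - Real.sqrt 3/2) ∈ cone t 0 ∩ cone s 2 := by
        constructor
        · rw [mem_cone_zero]
          constructor
          · simp; linarith
          · simp only []
            rw [show (t.1 + 1/2, t.2 - Real.sqrt 3/2).1 - t.1 = (1/2 : ℝ) by simp,
              show (t.1 + 1/2, t.2 - Real.sqrt 3/2).2 - t.2 = -(Real.sqrt 3/2) by simp]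
            rw [abs_of_nonneg (by norm_num : (0:ℝ) ≤ (1/2:ℝ))]
            linarith
        · rw [mem_cone_two]
          constructor
          · simp only []
            have : (t.1 + 1/2, t.2 - Real.sqrt 3/2).2 - s.2 = 0 := by simp; linarith
            rw [this]
          · simp only []
            have e : (t.1 + 1/2, t.2 - Real.sqrt 3/2).2 - s.2 = 0 := by simp; linarith
            rw [e]
            exact mul_nonneg hp.le (by simp; linarith)
      have hsT : s ∈ cone t 0 ∩ cone s 2 := by
        refine ⟨hs, ?_⟩
        rw [mem_cone_two]
        constructor <;> norm_num
      have hval : hexNorm ((t.1 + 1/2, t.2 - Real.sqrt 3/2) - s) = 1/2 - (s.1 - t.1) := by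
        have e2 : ((t.1 + 1/2, t.2 - Real.sqrt 3/2) - s).2 = 0 := by
          simp only [Prod.snd_sub]; linarith
        have e1 : ((t.1 + 1/2, t.2 - Real.sqrt 3/2) - s).1 = 1/2 - (s.1 - t.1) := by
          simp only [Prod.fst_sub]; ring
        have hnn : 0 ≤ Real.sqrt 3*(1/2 - (s.1-t.1)) := mul_nonneg hp.le (by linarith)
        rw [hexNorm_eq, e1, e2, abs_zero, mul_zero, add_zero, sub_zero,
          abs_of_nonneg hnn, max_self, max_eq_right hnn, div_eq_iff hpne]
        ring
      have hmem : (1/2 - (s.1 - t.1)) ∈ ((fun pq : (ℝ × ℝ) × (ℝ × ℝ) =>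
          hexNorm (pq.1 - pq.2)) '' ((cone t 0 ∩ cone s 2) ×ˢ (cone t 0 ∩ cone s 2))) :=
        ⟨((t.1 + 1/2, t.2 - Real.sqrt 3/2), s), Set.mem_prod.2 ⟨hAT, hsT⟩, hval⟩
      exact le_csSup ⟨1/2 - (s.1 - t.1), fun z hz => upper z hz⟩ hmem
  rw [hthex, hside]
  norm_num
  ring
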